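/- Let S be a set, G a finite group acting freely on S, and N : S × S × S → ℕ (written N_{ij}^k) structure constants such that: (a) for each i, j, the set {k : N_{ij}^k ≠ 0} is finite; (b) N_{σ(i) j}^{σ(k)} = N_{ij}^k and N_{i σ(j)}^{σ(k)} = N_{ij}^k for all σ ∈ G; (c) associativity holds: Σ_m N_{ij}^m N_{mk}^l = Σ_m N_{jk}^m N_{im}^l for all i,j,k,l. Then the orbit structure constants C_{[i][j]}^{[k]} := Σ_{σ ∈ G} N_{ij}^{σ(k)} are well defined (independent of the choice of representatives i, j, k of the orbits), and they satisfy the associativity relation Σ_{[m]} C_{[i][j]}^{[m]} C_{[m][k]}^{[l]} = Σ_{[m]} C_{[j][k]}^{[m]} C_{[i][m]}^{[l]}. -/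
import Mathlib


open MulAction

theorem orbit_structure_constants {S : Type*} {G : Type*} [Group G] [Fintype G]
    [MulAction G S]
    (hfree : ∀ (σ : G) (s : S), σ • s = s → σ = 1)
    (N : S → S → S → ℕ)
    (hfin : ∀ i j : S, {k : S | N i j k ≠ 0}.Finite)
    (hequiv₁ : ∀ (σ : G) (i j k : S), N (σ • i) j (σ • k) = N i j k)
    (hequiv₂ : ∀ (σ : G) (i j k : S), N i (σ • j) (σ • k) = N i j k)
    (hassoc : ∀ i j k l : S,
      (∑ᶠ m : S, N i j m * N m k l) = ∑ᶠ m : S, N j k m * N i m l) :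
    (∀ (σ₁ σ₂ σ₃ : G) (i j k : S),
        (∑ σ : G, N (σ₁ • i) (σ₂ • j) (σ • (σ₃ • k))) = ∑ σ : G, N i j (σ • k)) ∧
    (∀ i j k l : S,
        (∑ᶠ q : Quotient (orbitRel G S),
            (∑ σ : G, N i j (σ • q.out)) * ∑ σ : G, N q.out k (σ • l)) =
          ∑ᶠ q : Quotient (orbitRel G S),
            (∑ σ : G, N j k (σ • q.out)) * ∑ σ : G, N i q.out (σ • l)) := by
  -- Part 1: well-definedness
  have part1 : ∀ (σ₁ σ₂ σ₃ : G) (i j k : S),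
      (∑ σ : G, N (σ₁ • i) (σ₂ • j) (σ • (σ₃ • k))) = ∑ σ : G, N i j (σ • k) := by
    intro σ₁ σ₂ σ₃ i j k
    refine Fintype.sum_equiv
      ((Equiv.mulLeft (σ₂⁻¹ * σ₁⁻¹)).trans (Equiv.mulRight σ₃)) _ _ ?_
    intro σ
    have : N i j ((σ₂⁻¹ * σ₁⁻¹ * σ * σ₃) • k)
        = N (σ₁ • i) (σ₂ • j) (σ • σ₃ • k) := by
      rw [← hequiv₂ σ₂ i j _, ← hequiv₁ σ₁ i (σ₂ • j) _]
      congr 1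
      simp [← mul_smul, mul_assoc]
    simpa [mul_assoc] using this.symm
  refine ⟨part1, ?_⟩
  -- The orbit-sum equivalence
  set Q := Quotient (orbitRel G S) with hQ
  have hφbij : Function.Bijective (fun p : Q × G => p.2 • p.1.out) := by
    constructor
    · rintro ⟨q, σ⟩ ⟨p, τ⟩ h
      simp only at h
      have hqp : q = p := by
        have : orbitRel G S q.out p.out := by
          rw [orbitRel_apply]
          exact ⟨σ⁻¹ * τ, by show (σ⁻¹ * τ) • _ = _; rw [mul_smul, ← h, inv_smul_smul]⟩
        calc q = ⟦q.out⟧ := (Quotient.out_eq q).symm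
          _ = ⟦p.out⟧ := Quotient.sound this
          _ = p := Quotient.out_eq p
      subst hqp
      have : (τ⁻¹ * σ) • q.out = q.out := by rw [mul_smul, h, inv_smul_smul]
      have := hfree _ _ this
      have : σ = τ := by
        have h1 : τ * (τ⁻¹ * σ) = τ * 1 := by rw [this]
        simpa [← mul_assoc] using h1
      exact Prod.ext rfl this
    · intro m
      have h1 : orbitRel G S ((⟦m⟧ : Q).out) m := Quotient.exact (Quotient.out_eq _)
      rw [orbitRel_apply] at h1
      obtain ⟨σ, hσ⟩ := h1
      refine ⟨(⟦m⟧, σ⁻¹), ?_⟩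
      show σ⁻¹ • ((⟦m⟧ : Q).out) = m
      rw [← hσ, inv_smul_smul]
  set e : Q × G ≃ S := Equiv.ofBijective _ hφbij with he
  have he_apply : ∀ (q : Q) (σ : G), e (q, σ) = σ • q.out := fun _ _ => rfl
  -- Key orbit decomposition of a finitely supported sum
  have key : ∀ f : S → ℕ, (Function.support f).Finite →
      (∑ᶠ m : S, f m) = ∑ᶠ q : Q, ∑ σ : G, f (σ • q.out) := by
    intro f hf
    have hsupp : (Function.support (fun p : Q × G => f (e p))).Finite := by
      have : Function.support (fun p : Q × G => f (e p)) = e ⁻¹' Function.support f := rfl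
      rw [this]
      exact Set.Finite.preimage e.injective.injOn hf
    calc (∑ᶠ m : S, f m) = ∑ᶠ p : Q × G, f (e p) := (finsum_comp_equiv e).symm
      _ = ∑ᶠ (q : Q) (σ : G), f (e (q, σ)) := finsum_curry _ hsupp
      _ = ∑ᶠ q : Q, ∑ σ : G, f (σ • q.out) := by
          congr 1; funext q
          rw [finsum_eq_sum_of_fintype]
          rfl
  -- Generic half of the computation
  have half : ∀ (a : S → ℕ) (b : S → S → ℕ) (l : S),
      (Function.support a).Finite →
      (∀ (σ : G) (m : S), (∑ τ : G, b (σ • m) (τ • l)) = ∑ τ : G, b m (τ • l)) →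
      (∑ᶠ q : Q, (∑ σ : G, a (σ • q.out)) * ∑ τ : G, b q.out (τ • l)) =
        ∑ τ : G, ∑ᶠ m : S, a m * b m (τ • l) := by
    intro a b l ha hb
    have hFsupp : Function.support (fun m => a m * ∑ τ : G, b m (τ • l))
        ⊆ ha.toFinset := by
      intro m hm
      simp only [Function.mem_support, ne_eq, mul_eq_zero, not_or] at hm
      simpa using hm.1
    have hτsupp : ∀ τ : G, Function.support (fun m => a m * b m (τ • l))
        ⊆ ha.toFinset := by
      intro τ m hm
      simp only [Function.mem_support, ne_eq, mul_eq_zero, not_or] at hm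
      simpa using hm.1
    calc (∑ᶠ q : Q, (∑ σ : G, a (σ • q.out)) * ∑ τ : G, b q.out (τ • l))
        = ∑ᶠ q : Q, ∑ σ : G, (a (σ • q.out) * ∑ τ : G, b (σ • q.out) (τ • l)) := by
          congr 1; funext q
          rw [Finset.sum_mul]
          refine Finset.sum_congr rfl fun σ _ => ?_
          rw [hb σ q.out]
      _ = ∑ᶠ m : S, (a m * ∑ τ : G, b m (τ • l)) := by
          refine (key (fun m => a m * ∑ τ : G, b m (τ • l)) ?_).symm
          exact ha.subset (fun m hm => by
            simp only [Function.mem_support, ne_eq, mul_eq_zero, not_or] at hm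
            exact hm.1)
      _ = ∑ m ∈ ha.toFinset, (a m * ∑ τ : G, b m (τ • l)) :=
          finsum_eq_finset_sum_of_support_subset _ hFsupp
      _ = ∑ m ∈ ha.toFinset, ∑ τ : G, a m * b m (τ • l) := by
          refine Finset.sum_congr rfl fun m _ => ?_
          rw [Finset.mul_sum]
      _ = ∑ τ : G, ∑ m ∈ ha.toFinset, a m * b m (τ • l) := Finset.sum_comm
      _ = ∑ τ : G, ∑ᶠ m : S, a m * b m (τ • l) := by
          refine Finset.sum_congr rfl fun τ _ => ?_
          exact (finsum_eq_finset_sum_of_support_subset _ (hτsupp τ)).symm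
  intro i j k l
  have hb₁ : ∀ (σ : G) (m : S),
      (∑ τ : G, N (σ • m) k (τ • l)) = ∑ τ : G, N m k (τ • l) := by
    intro σ m
    simpa using part1 σ 1 1 m k l
  have hb₂ : ∀ (σ : G) (m : S),
      (∑ τ : G, N i (σ • m) (τ • l)) = ∑ τ : G, N i m (τ • l) := by
    intro σ m
    simpa using part1 1 σ 1 i m l
  calc (∑ᶠ q : Q, (∑ σ : G, N i j (σ • q.out)) * ∑ σ : G, N q.out k (σ • l))
      = ∑ τ : G, ∑ᶠ m : S, N i j m * N m k (τ • l) :=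
        half (N i j) (fun m x => N m k x) l (hfin i j) hb₁
    _ = ∑ τ : G, ∑ᶠ m : S, N j k m * N i m (τ • l) := by
        exact Finset.sum_congr rfl fun τ _ => hassoc i j k (τ • l)
    _ = ∑ᶠ q : Q, (∑ σ : G, N j k (σ • q.out)) * ∑ σ : G, N i q.out (σ • l) :=
        (half (N j k) (fun m x => N i m x) l (hfin j k) hb₂).symm
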